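/- Let B be a commutative ring on which a finite group G acts by ring automorphisms, and let A = B^G be the ring of invariants. Let f ∈ A[[t]] be a power series which, regarded as an element of B[[t]], is rational. Then f is rational as an element of A[[t]]. -/

import Mathlib

/-- A power series over a commutative ring `A` is rational if there is a polynomial `q` with
constant term `1` such that `q·f` is a polynomial. -/
def IsRationalSeries {A : Type*} [CommRing A] (f : PowerSeries A) : Prop :=
  ∃ q p : Polynomial A, q.coeff 0 = 1 ∧ (q : PowerSeries A) * f = (p : PowerSeries A)

/-- The subring of invariants `B^G` of a group `G` acting on a ring `B` by ring
automorphisms. -/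
def fixedSubring (G B : Type*) [Group G] [Ring B] [MulSemiringAction G B] : Subring B where
  carrier := MulAction.fixedPoints G B
  one_mem' := fun g => smul_one g
  mul_mem' := fun {a b} ha hb g => by
    rw [smul_mul', ha g, hb g]
  add_mem' := fun {a b} ha hb g => by
    rw [smul_add, ha g, hb g]
  zero_mem' := fun g => smul_zero g
  neg_mem' := fun {a} ha g => by
    rw [smul_neg, ha g]

/-- Let a finite group `G` act on a commutative ring `B` by ring automorphisms, with invariant
ring `A = B^G`.  A power series over `A` which is rational as a power series over `B` is
already rational over `A`. -/
theorem rational_over_invariants_of_rational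
    (G B : Type*) [Group G] [Finite G] [CommRing B] [MulSemiringAction G B]
    (f : PowerSeries (fixedSubring G B))
    (hf : IsRationalSeries (PowerSeries.map (fixedSubring G B).subtype f)) :
    IsRationalSeries f := by
  classical
  cases nonempty_fintype G
  obtain ⟨q, p, hq0, hqp⟩ := hf
  set ι := (fixedSubring G B).subtype with hι'
  have hι : Function.Injective ι := Subtype.val_injective
  have hmapinj : Function.Injective (PowerSeries.map ι) := by
    intro x y h
    ext n
    have h' := congrArg (PowerSeries.coeff (R := B) n) h
    rw [PowerSeries.coeff_map, PowerSeries.coeff_map] at h'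
    exact h'
  set Q : Polynomial B := ∏ g : G, g • q with hQ
  have hQcoeff : ∀ n, Q.coeff n ∈ fixedSubring G B := by
    intro n g
    have hgQ : g • Q = Q := by
      have h1 : g • Q = ∏ h : G, g • (h • q) := by
        rw [hQ]
        exact map_prod (MulSemiringAction.toRingHom G (Polynomial B) g) _ _
      rw [h1]
      simp_rw [smul_smul]
      exact Equiv.prod_comp (Equiv.mulLeft g) (fun h => h • q)
    calc g • Q.coeff n = (g • Q).coeff n := (Polynomial.coeff_smul g Q n).symm
      _ = Q.coeff n := by rw [hgQ]
  obtain ⟨Qa, hQa⟩ : ∃ Qa : Polynomial (fixedSubring G B), Qa.map ι = Q := by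
    rw [← Polynomial.mem_lifts, Polynomial.lifts_iff_coeff_lifts]
    intro n
    exact ⟨⟨Q.coeff n, hQcoeff n⟩, rfl⟩
  have hcoe : ∀ r : Polynomial (fixedSubring G B),
      ((r.map ι : Polynomial B) : PowerSeries B)
      = PowerSeries.map ι (r : PowerSeries (fixedSubring G B)) := by
    intro r
    ext n
    simp [Polynomial.coeff_coe, PowerSeries.coeff_map]
  have hsplit : Q = (∏ g ∈ Finset.univ.erase (1 : G), g • q) * q := by
    rw [hQ, ← Finset.prod_erase_mul Finset.univ _ (Finset.mem_univ (1 : G)), one_smul]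
  set P : Polynomial B := (∏ g ∈ Finset.univ.erase (1 : G), g • q) * p with hP
  have hQP : PowerSeries.map ι ((Qa : PowerSeries (fixedSubring G B)) * f)
      = (P : PowerSeries B) := by
    rw [map_mul, ← hcoe Qa, hQa, hsplit, hP]
    push_cast
    rw [mul_assoc, hqp]
  obtain ⟨Pa, hPa⟩ : ∃ Pa : Polynomial (fixedSubring G B), Pa.map ι = P := by
    rw [← Polynomial.mem_lifts, Polynomial.lifts_iff_coeff_lifts]
    intro n
    refine ⟨PowerSeries.coeff (R := fixedSubring G B) n
      ((Qa : PowerSeries (fixedSubring G B)) * f), ?_⟩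
    have h' := congrArg (PowerSeries.coeff (R := B) n) hQP
    rwa [PowerSeries.coeff_map, Polynomial.coeff_coe] at h'
  refine ⟨Qa, Pa, ?_, ?_⟩
  · apply hι
    have hone : ∀ g : G, (g • q).coeff 0 = 1 := fun g => by
      rw [Polynomial.coeff_smul, hq0]
      exact smul_one g
    have h1 : Q.coeff 0 = 1 := by
      have h2 : Polynomial.constantCoeff Q = ∏ g : G, Polynomial.constantCoeff (g • q) :=
        map_prod _ _ _
      simp only [Polynomial.constantCoeff_apply] at h2
      rw [h2]
      simp [hone]
    calc ι (Qa.coeff 0) = (Qa.map ι).coeff 0 := (Polynomial.coeff_map ι 0).symm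
      _ = 1 := by rw [hQa, h1]
      _ = ι 1 := by simp
  · apply hmapinj
    rw [hQP, ← hPa, hcoe Pa]
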